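/- In the two-agent Markov example with 𝒯_1 = [1,6], 𝒯_2 = [0,10], mean bounds [4,5] and [3,7], and c_1 = c_2 = 2: for any favored-agent mechanism with favored agent 1 and threshold ν ∈ [1,6), the two-point distribution putting probability 1/2 on (6, 6.5 + ν/4) and 1/2 on (2, 0) belongs to the Markov ambiguity set, and the mechanism's expected payoff under it equals 3.25 + ν/8, which is strictly less than the optimal value 4. Hence any such mechanism is strictly suboptimal. -/

import Mathlib

open MeasureTheory

private lemma int_two_point (a b : ℝ×ℝ) (f : ℝ×ℝ → ℝ) :
    ∫ x, f x ∂(((1:ENNReal)/2) • Measure.dirac a + ((1:ENNReal)/2) • Measure.dirac b)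
    = (f a + f b)/2 := by
  have ha : Integrable f (Measure.dirac a) := by
    refine (integrable_const (f a)).congr ?_
    rw [ae_dirac_eq]
    exact Filter.eventually_pure.2 rfl
  have hb : Integrable f (Measure.dirac b) := by
    refine (integrable_const (f b)).congr ?_
    rw [ae_dirac_eq]
    exact Filter.eventually_pure.2 rfl
  rw [integral_add_measure (ha.smul_measure (by norm_num)) (hb.smul_measure (by norm_num)),
    integral_smul_measure, integral_smul_measure, integral_dirac, integral_dirac]
  simp [ENNReal.toReal_div]
  ring

private lemma ae_two_point (a b : ℝ×ℝ) (p : ℝ×ℝ → Prop) (hpa : p a) (hpb : p b) :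
    ∀ᵐ x ∂(((1:ENNReal)/2) • Measure.dirac a + ((1:ENNReal)/2) • Measure.dirac b), p x := by
  have h2 : ((1:ENNReal)/2) ≠ 0 := by norm_num
  rw [ae_add_measure_iff, Measure.ae_ennreal_smul_measure_eq h2, Measure.ae_ennreal_smul_measure_eq h2, ae_dirac_eq, ae_dirac_eq]
  exact ⟨Filter.eventually_pure.2 hpa, Filter.eventually_pure.2 hpb⟩

/-- In the two-agent Markov example with `𝒯_1 = [1,6]`, `𝒯_2 = [0,10]`,
mean bounds `[4,5]` and `[3,7]`, and `c_1 = c_2 = 2`: for any favored-agent mechanism with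
favored agent `1` and threshold `ν ∈ [1,6)` (whose payoff is `t_1` when `t_2 - 2 < ν` and
`max (t_1 - 2) (t_2 - 2)` when `t_2 - 2 > ν`), the two-point distribution putting
probability `1/2` on `(6, 6.5 + ν/4)` and `1/2` on `(2, 0)` belongs to the Markov
ambiguity set, the mechanism's expected payoff under it equals `3.25 + ν/8 < 4`, and hence
its worst-case expected payoff is strictly below the optimal value `4`. -/
theorem stmt_15 (ν : ℝ) (hν1 : 1 ≤ ν) (hν2 : ν < 6)
    (pay : ℝ → ℝ → ℝ)
    (hpayI : ∀ t1 ∈ Set.Icc (1:ℝ) 6, ∀ t2 ∈ Set.Icc (0:ℝ) 10,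
      t2 - 2 < ν → pay t1 t2 = t1)
    (hpayII : ∀ t1 ∈ Set.Icc (1:ℝ) 6, ∀ t2 ∈ Set.Icc (0:ℝ) 10,
      ν < t2 - 2 → pay t1 t2 = max (t1 - 2) (t2 - 2))
    (P : Measure (ℝ × ℝ))
    (hP : P = ((1:ENNReal)/2) • Measure.dirac ((6:ℝ), 6.5 + ν/4)
      + ((1:ENNReal)/2) • Measure.dirac ((2:ℝ), (0:ℝ))) :
    IsProbabilityMeasure P ∧
    (∀ᵐ t ∂P, t.1 ∈ Set.Icc (1:ℝ) 6 ∧ t.2 ∈ Set.Icc (0:ℝ) 10) ∧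
    (∫ t : ℝ × ℝ, t.1 ∂P) ∈ Set.Icc (4:ℝ) 5 ∧
    (∫ t : ℝ × ℝ, t.2 ∂P) ∈ Set.Icc (3:ℝ) 7 ∧
    (∫ t : ℝ × ℝ, pay t.1 t.2 ∂P) = 3.25 + ν/8 ∧
    (3.25 + ν/8 : ℝ) < 4 ∧
    sInf {x : ℝ | ∃ Q : Measure (ℝ × ℝ), IsProbabilityMeasure Q ∧
        (∀ᵐ t ∂Q, t.1 ∈ Set.Icc (1:ℝ) 6 ∧ t.2 ∈ Set.Icc (0:ℝ) 10) ∧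
        (∫ t : ℝ × ℝ, t.1 ∂Q) ∈ Set.Icc (4:ℝ) 5 ∧
        (∫ t : ℝ × ℝ, t.2 ∂Q) ∈ Set.Icc (3:ℝ) 7 ∧
        x = ∫ t : ℝ × ℝ, pay t.1 t.2 ∂Q} < 4 := by
  subst hP
  set a : ℝ×ℝ := ((6:ℝ), 6.5 + ν/4) with haa
  set b : ℝ×ℝ := ((2:ℝ), (0:ℝ)) with hbb
  have ha2 : (6.5 + ν/4 : ℝ) ∈ Set.Icc (0:ℝ) 10 := by
    constructor <;> nlinarith
  have hprob : IsProbabilityMeasure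
      (((1:ENNReal)/2) • Measure.dirac a + ((1:ENNReal)/2) • Measure.dirac b) := by
    constructor
    simp [Measure.add_apply]
    rw [ENNReal.inv_two_add_inv_two]
  have hae : ∀ᵐ t ∂(((1:ENNReal)/2) • Measure.dirac a + ((1:ENNReal)/2) • Measure.dirac b),
      t.1 ∈ Set.Icc (1:ℝ) 6 ∧ t.2 ∈ Set.Icc (0:ℝ) 10 := by
    refine ae_two_point a b _ ?_ ?_
    · exact ⟨by constructor <;> norm_num, ha2⟩
    · constructor <;> constructor <;> norm_num
  have h1 := int_two_point a b (fun t => t.1)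
  have h2 := int_two_point a b (fun t => t.2)
  have hpay : pay a.1 a.2 = 4.5 + ν/4 := by
    rw [hpayII a.1 (by constructor <;> norm_num) a.2 ha2 (by simp [haa]; linarith)]
    simp [haa]
    rw [max_eq_right (by linarith)]
    ring
  have hpayb : pay b.1 b.2 = 2 := by
    rw [hpayI b.1 (by constructor <;> norm_num) b.2 (by constructor <;> norm_num)
      (by simp [hbb]; linarith)]
  have h3 := int_two_point a b (fun t => pay t.1 t.2)
  have heq : (∫ t : ℝ×ℝ, pay t.1 t.2
      ∂(((1:ENNReal)/2) • Measure.dirac a + ((1:ENNReal)/2) • Measure.dirac b))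
      = 3.25 + ν/8 := by
    rw [h3, hpay, hpayb]; ring
  refine ⟨hprob, hae, ?_, ?_, heq, by linarith, ?_⟩
  · rw [h1]; simp [haa, hbb]; norm_num
  · rw [h2]; simp [haa, hbb]; constructor <;> linarith
  · set S : Set ℝ := {x : ℝ | ∃ Q : Measure (ℝ × ℝ), IsProbabilityMeasure Q ∧
        (∀ᵐ t ∂Q, t.1 ∈ Set.Icc (1:ℝ) 6 ∧ t.2 ∈ Set.Icc (0:ℝ) 10) ∧
        (∫ t : ℝ × ℝ, t.1 ∂Q) ∈ Set.Icc (4:ℝ) 5 ∧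
        (∫ t : ℝ × ℝ, t.2 ∂Q) ∈ Set.Icc (3:ℝ) 7 ∧
        x = ∫ t : ℝ × ℝ, pay t.1 t.2 ∂Q} with hS
    have hmem : (3.25 + ν/8 : ℝ) ∈ S := by
      refine ⟨_, hprob, hae, ?_, ?_, heq.symm⟩
      · rw [h1]; simp [haa, hbb]; norm_num
      · rw [h2]; simp [haa, hbb]; constructor <;> linarith
    by_cases hbd : BddBelow S
    · exact lt_of_le_of_lt (csInf_le hbd hmem) (by linarith)
    · rw [Real.sInf_of_not_bddBelow hbd]; norm_num
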